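/- Let d ∈ ℕ, let x, ν ∈ ℝ^d, and let a, L_D, L_N, N, F, G_D : ℝ^d → ℝ and a real number G_N(x). Assume: (i) L_D, L_N, N, F and G_D are differentiable at x; (ii) L_N(x) = 0; (iii) L_D(x) ≠ 0; (iv) a(x)·⟨∇L_N(x), ν⟩ ≠ 0; (v) a(x)·⟨∇G_D(x), ν⟩ = 0; and (vi) F(x)·(L_D(x)·a(x)·⟨∇L_N(x), ν⟩) = G_N(x) − L_D(x)·a(x)·⟨∇N(x), ν⟩ − N(x)·a(x)·⟨∇L_D(x), ν⟩. Then the function û defined by û(y) = L_D(y)·N(y) + L_D(y)·L_N(y)·F(y) + G_D(y) satisfies a(x)·⟨∇û(x), ν⟩ = G_N(x). (This verifies that the single-network trial function û = L_D N_θ + L_D L_N F_N + G_D with F_N given by equation (10) satisfies the Neumann portion of a mixed boundary condition exactly at each point of the Neumann boundary where L_D does not vanish.) -/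

import Mathlib

open RealInnerProductSpace

lemma inner_grad {d : ℕ} (f : EuclideanSpace ℝ (Fin d) → ℝ) (x ν : EuclideanSpace ℝ (Fin d)) :
    ⟪gradient f x, ν⟫ = fderiv ℝ f x ν := by
  rw [gradient, InnerProductSpace.toDual_symm_apply]

/-- The single-network trial function `û = L_D·N + L_D·L_N·F + G_D` with `F`
given by equation (10) satisfies the Neumann portion of a mixed boundary
condition exactly at each Neumann boundary point where `L_D` does not vanish. -/
theorem mixed_bc_single_network_neumann_part (d : ℕ)
    (x ν : EuclideanSpace ℝ (Fin d))
    (a LD LN N F GD : EuclideanSpace ℝ (Fin d) → ℝ) (GNx : ℝ)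
    (hLD : DifferentiableAt ℝ LD x) (hLN : DifferentiableAt ℝ LN x)
    (hN : DifferentiableAt ℝ N x) (hF : DifferentiableAt ℝ F x)
    (hGD : DifferentiableAt ℝ GD x)
    (hLN0 : LN x = 0) (hLD0 : LD x ≠ 0)
    (hden : a x * ⟪gradient LN x, ν⟫ ≠ 0)
    (hGDn : a x * ⟪gradient GD x, ν⟫ = 0)
    (hFval : F x * (LD x * a x * ⟪gradient LN x, ν⟫) =
      GNx - LD x * a x * ⟪gradient N x, ν⟫ - N x * a x * ⟪gradient LD x, ν⟫) :
    a x * ⟪gradient (fun y => LD y * N y + LD y * LN y * F y + GD y) x, ν⟫ = GNx := by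
  simp only [inner_grad] at *
  rw [fderiv_fun_add (((hLD.fun_mul hN).fun_add ((hLD.fun_mul hLN).fun_mul hF))) hGD,
    fderiv_fun_add (hLD.fun_mul hN) ((hLD.fun_mul hLN).fun_mul hF),
    fderiv_fun_mul hLD hN, fderiv_fun_mul (hLD.fun_mul hLN) hF, fderiv_fun_mul hLD hLN]
  simp only [ContinuousLinearMap.add_apply, ContinuousLinearMap.smul_apply, smul_eq_mul, hLN0,
    mul_zero, zero_mul, add_zero, zero_add]
  nlinarith [hFval, hGDn]
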